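/- Every nonzero R-submodule M of L has a Gröbner basis; that is, there exists a finite subset G of M∖{0} with Lt(G) = Lt(M). -/

import Mathlib

open MvPolynomial

/-- The set `𝕏ₑ` of monomials (power products) of the free module `L`:
a pair of a monomial exponent of `R = A[x₁,…,xₙ]` and a basis index. -/
abbrev Mon (n r : ℕ) := (Fin n →₀ ℕ) × Fin r

/-- The free module `L = R e₁ ⊕ ⋯ ⊕ R e_r` over `R = A[x₁,…,xₙ]`. -/
abbrev Lmod (A : Type*) [CommRing A] (n r : ℕ) := Fin r → MvPolynomial (Fin n) A

variable {A B : Type*} [CommRing A] [CommRing B] {n r : ℕ}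

/-- The coefficient of `f ∈ L` at the monomial `X ∈ 𝕏ₑ`. -/
def coeffL (f : Lmod A n r) (X : Mon n r) : A := MvPolynomial.coeff X.1 (f X.2)

/-- The element `c·X` of `L`, for a monomial `X ∈ 𝕏ₑ` and `c ∈ A`. -/
noncomputable def monL (X : Mon n r) (c : A) : Lmod A n r :=
  Pi.single X.2 (MvPolynomial.monomial X.1 c)

open Classical in
/-- The (finite) set of monomials appearing in `f ∈ L` with nonzero coefficient. -/
noncomputable def suppL (f : Lmod A n r) : Finset (Mon n r) :=
  Finset.univ.biUnion fun l => (f l).support.image fun d => (d, l)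

/-- Multiplication of a monomial `𝐱 ∈ 𝕏` of `R` with a monomial `X ∈ 𝕏ₑ` of `L`. -/
noncomputable def mulMon (x : Fin n →₀ ℕ) (X : Mon n r) : Mon n r := (x + X.1, X.2)

/-- `X ∣ Y` for monomials of `L` : `Y = 𝐱 X` for some monomial `𝐱` of `R`. -/
def MonDvd (X Y : Mon n r) : Prop := ∃ x : Fin n →₀ ℕ, Y = mulMon x X

/-- A term order on `𝕏ₑ`: a (linear) order such that (1) `X < 𝐱X` for `𝐱 ≠ 1`, and
(2) `X < Y → 𝐱X < 𝐱Y`. -/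
def IsTermOrder (n r : ℕ) [LinearOrder (Mon n r)] : Prop :=
  (∀ (X : Mon n r) (x : Fin n →₀ ℕ), x ≠ 0 → X < mulMon x X) ∧
  (∀ (X Y : Mon n r) (x : Fin n →₀ ℕ), X < Y → mulMon x X < mulMon x Y)

section Order
variable [LinearOrder (Mon n r)]

/-- The leading power product `lp f` of `f ∈ L` (with value `⊥` for `f = 0`). -/
noncomputable def lpW (f : Lmod A n r) : WithBot (Mon n r) := (suppL f).max

/-- The leading coefficient `lc f` of `f ∈ L` (with junk value `0` for `f = 0`). -/
noncomputable def lcL (f : Lmod A n r) : A :=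
  if h : (suppL f).Nonempty then coeffL f ((suppL f).max' h) else 0

/-- The leading term `lt f` of `f ∈ L` (with value `0` for `f = 0`). -/
noncomputable def ltL (f : Lmod A n r) : Lmod A n r :=
  if h : (suppL f).Nonempty then monL ((suppL f).max' h) (lcL f) else 0

/-- `Lt S` : the `R`-submodule of `L` generated by the leading terms of the
nonzero elements of `S`. -/
noncomputable def LtS (S : Set (Lmod A n r)) :
    Submodule (MvPolynomial (Fin n) A) (Lmod A n r) :=
  Submodule.span (MvPolynomial (Fin n) A) (ltL '' {f ∈ S | f ≠ 0})

/-- `lp g` divides the monomial `X`. -/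
def lpDvdMon (g : Lmod A n r) (X : Mon n r) : Prop :=
  ∃ Y : Mon n r, lpW g = (Y : WithBot (Mon n r)) ∧ MonDvd Y X

/-- `lp g` divides `lp f`. -/
def lpDvd (g f : Lmod A n r) : Prop :=
  ∃ Y Z : Mon n r, lpW g = (Y : WithBot (Mon n r)) ∧ lpW f = (Z : WithBot (Mon n r)) ∧
    MonDvd Y Z

/-- One reduction step `f →_F h`. -/
def Step (F : Finset (Lmod A n r)) (f h : Lmod A n r) : Prop :=
  ∃ (a : Lmod A n r → A) (x : Lmod A n r → (Fin n →₀ ℕ)),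
    h = f - ∑ g ∈ F, a g • ((MvPolynomial.monomial (x g) (1 : A)) • g) ∧
    (∀ g ∈ F, a g ≠ 0 → lpW f = (lpW g).map (mulMon (x g))) ∧
    ltL f = ∑ g ∈ F, a g • ((MvPolynomial.monomial (x g) (1 : A)) • ltL g)

/-- `f ⇒_F h` : `f` reduces to `h` modulo `F` (a finite chain of reduction steps). -/
def Red (F : Finset (Lmod A n r)) : Lmod A n r → Lmod A n r → Prop :=
  Relation.TransGen (Step F)

/-- `f` reduces strictly to `h` modulo `F` : `f ⇒_F h` and `lp h < lp f`. -/
def StrictRed (F : Finset (Lmod A n r)) (f h : Lmod A n r) : Prop :=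
  Red F f h ∧ lpW h < lpW f

/-- `G` is a Gröbner basis for `M` : a finite subset of `M ∖ {0}` with
`Lt G = Lt M`. -/
def IsGB (G : Finset (Lmod A n r))
    (M : Submodule (MvPolynomial (Fin n) A) (Lmod A n r)) : Prop :=
  (G : Set (Lmod A n r)) ⊆ (M : Set (Lmod A n r)) \ {0} ∧
  LtS (G : Set (Lmod A n r)) = LtS (M : Set (Lmod A n r))

open Classical in
/-- A Gröbner basis `G` is minimal if no `g ∈ G` can be strictly reduced with
respect to `G ∖ {g}`. -/
noncomputable def IsMinimalGB (G : Finset (Lmod A n r)) : Prop :=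
  ∀ g ∈ G, ¬ ∃ h : Lmod A n r, StrictRed (G.erase g) g h

/-- The set `T_G` of totally reduced vectors, relative to a choice of coset
representatives `C X ⊆ A` and of lifts `X̃ = til X`. -/
def TGset (C : Mon n r → Set A) (til : Mon n r → Lmod A n r) : Set (Lmod A n r) :=
  {f | ∃ coef : Mon n r →₀ A, (∀ X, coef X ∈ C X) ∧ f = coef.sum fun X c => c • til X}

end Order

section Graded
variable {𝕜 : Type*} [CommSemiring 𝕜] [Algebra 𝕜 A]

/-- `A = ⊕_{0 ≤ i < a} A_i` is a graded tdvr of length `a` with distinguished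
element `ϖ ∈ A_1` : each `A_i` (`i < a`) is a one-dimensional `𝕜`-vector space
generated by `ϖ^i`, and `A_i = 0` for `i ≥ a`. -/
def IsGradedTdvr (𝒜 : ℕ → Submodule 𝕜 A) (a : ℕ∞) (ϖ : A) : Prop :=
  1 ≤ a ∧ ϖ ∈ 𝒜 1 ∧
  (∀ i : ℕ, (i : ℕ∞) < a → (ϖ ^ i ≠ 0 ∧ 𝒜 i = Submodule.span 𝕜 {ϖ ^ i})) ∧
  (∀ i : ℕ, a ≤ (i : ℕ∞) → 𝒜 i = ⊥)

open Classical in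
/-- The valuation of the graded tdvr `A` of length `a` : the smallest degree in
which `x` has a nonzero component, and `a` for `x = 0`. -/
noncomputable def valA (𝒜 : ℕ → Submodule 𝕜 A) [GradedAlgebra 𝒜] (a : ℕ∞) (x : A) : ℕ∞ :=
  if x = 0 then a
  else sInf {m : ℕ∞ | ∃ i : ℕ, (i : ℕ∞) = m ∧ (DirectSum.decompose 𝒜 x i : A) ≠ 0}

/-- `f ∈ L` is homogeneous of degree `i` (i.e. `f ∈ L_i`): all its coefficients
lie in `A_i`. -/
def HomogL (𝒜 : ℕ → Submodule 𝕜 A) (i : ℕ) (f : Lmod A n r) : Prop :=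
  ∀ X : Mon n r, coeffL f X ∈ 𝒜 i

/-- The degree-`i` part of `f ∈ L`, taken coefficientwise. -/
noncomputable def compL (𝒜 : ℕ → Submodule 𝕜 A) [GradedAlgebra 𝒜] (i : ℕ)
    (f : Lmod A n r) : Lmod A n r := fun l =>
  ∑ d ∈ (f l).support,
    MvPolynomial.monomial d ((DirectSum.decompose 𝒜 (MvPolynomial.coeff d (f l)) i : A))

/-- `M` is a graded submodule of `L` : it contains the homogeneous components of
each of its elements. -/
def IsGradedSub (𝒜 : ℕ → Submodule 𝕜 A) [GradedAlgebra 𝒜]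
    (M : Submodule (MvPolynomial (Fin n) A) (Lmod A n r)) : Prop :=
  ∀ f ∈ M, ∀ i : ℕ, compL 𝒜 i f ∈ M

/-- `A^{<m} = ⊕_{0 ≤ i < m} A_i`. -/
def Aless (𝒜 : ℕ → Submodule 𝕜 A) (m : ℕ∞) : Submodule 𝕜 A :=
  ⨆ i ∈ {i : ℕ | (i : ℕ∞) < m}, 𝒜 i

open Classical in
/-- Truncation of `c ∈ A` to its components of degree `< m` (the action of `c`
on `A^{<m} = A/(⊕_{i ≥ m} A_i)`). -/
noncomputable def truncA (𝒜 : ℕ → Submodule 𝕜 A) [GradedAlgebra 𝒜] (m : ℕ∞) (c : A) : A :=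
  ∑ i ∈ (DirectSum.decompose 𝒜 c).support.filter (fun i : ℕ => (i : ℕ∞) < m),
    (DirectSum.decompose 𝒜 c i : A)

open Classical in
/-- The invariant `m_X` attached to a Gröbner basis `G` :
`m_X = min { v(lc g) | g ∈ G, lp g ∣ X }`, and `m_X = a` if no `lp g` divides `X`. -/
noncomputable def mXv [LinearOrder (Mon n r)] (𝒜 : ℕ → Submodule 𝕜 A) [GradedAlgebra 𝒜]
    (a : ℕ∞) (G : Finset (Lmod A n r)) (X : Mon n r) : ℕ∞ :=
  if ∃ g ∈ G, lpDvdMon g X then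
    sInf {m : ℕ∞ | ∃ g ∈ G, lpDvdMon g X ∧ m = valA 𝒜 a (lcL g)}
  else a

end Graded

section Tdvr

/-- `f ∈ I·L`, coefficientwise. -/
def memFil (I : Ideal A) (f : Lmod A n r) : Prop := ∀ X : Mon n r, coeffL f X ∈ I

/-- The symbol map `L → gr(L)` in degree `i`, applied coefficientwise
(`s = sym i : A → gr(A)` being the degree-`i` symbol map of the ring). -/
noncomputable def symL (s : A → B) (f : Lmod A n r) : Lmod B n r := fun l =>
  ∑ d ∈ (f l).support, MvPolynomial.monomial d (s (MvPolynomial.coeff d (f l)))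

/-- The associated graded module `gr(M) ⊆ gr(L)` of a submodule `M ⊆ L`, with
respect to the `I`-adic filtration: the `gr(R)`-submodule generated by the
symbols of the elements of `M ∩ I^i·L`, for all `i`. -/
noncomputable def grSub (I : Ideal A) (sym : ℕ → A → B)
    (M : Submodule (MvPolynomial (Fin n) A) (Lmod A n r)) :
    Submodule (MvPolynomial (Fin n) B) (Lmod B n r) :=
  Submodule.span (MvPolynomial (Fin n) B)
    {h : Lmod B n r | ∃ i : ℕ, ∃ f ∈ M, memFil (I ^ i) f ∧ h = symL (sym i) f}

end Tdvr

open Submodule in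
/-- In a Noetherian module, the span of any set equals the span of a finite subset. -/
theorem exists_finset_subset_span_eq {R M : Type*} [CommRing R] [AddCommGroup M]
    [Module R M] [IsNoetherian R M] (S : Set M) :
    ∃ T : Finset M, ↑T ⊆ S ∧ span R (T : Set M) = span R S := by
  classical
  obtain ⟨s, hs⟩ := (IsNoetherian.noetherian (span R S))
  choose T hTsub hTmem using fun x (hx : x ∈ span R S) =>
    Submodule.mem_span_finite_of_mem_span hx
  have hmem : ∀ x ∈ s, x ∈ span R S := fun x hx => hs ▸ subset_span hx
  refine ⟨s.attach.biUnion (fun x => T x.1 (hmem x.1 x.2)), ?_, ?_⟩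
  · intro t ht
    simp only [Finset.coe_biUnion, Set.mem_iUnion] at ht
    obtain ⟨x, _, hx⟩ := ht
    exact hTsub _ _ hx
  · refine le_antisymm (span_mono ?_) ?_
    · intro t ht
      simp only [Finset.coe_biUnion, Set.mem_iUnion] at ht
      obtain ⟨x, _, hx⟩ := ht
      exact hTsub _ _ hx
    · rw [← hs]
      refine span_le.2 fun x hx => ?_
      refine span_mono ?_ (hTmem x (hmem x hx))
      intro y hy
      simp only [Finset.coe_biUnion, Set.mem_iUnion]
      exact ⟨⟨x, hx⟩, Finset.mem_attach _ _, hy⟩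

/-- over a Noetherian coefficient ring, every nonzero submodule
`M ⊆ L` has a Gröbner basis: a finite `G ⊆ M ∖ {0}` with `Lt G = Lt M`. -/
theorem exists_groebner_basis {A : Type*} [CommRing A] [IsNoetherianRing A]
    {n r : ℕ} (hr : 1 ≤ r) [LinearOrder (Mon n r)] (hto : IsTermOrder n r)
    (M : Submodule (MvPolynomial (Fin n) A) (Lmod A n r)) (hM : M ≠ ⊥) :
    ∃ G : Finset (Lmod A n r),
      (G : Set (Lmod A n r)) ⊆ (M : Set (Lmod A n r)) \ {0} ∧
      LtS (G : Set (Lmod A n r)) = LtS (M : Set (Lmod A n r)) := by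
  classical
  set S : Set (Lmod A n r) := ltL '' {f ∈ (M : Set (Lmod A n r)) | f ≠ 0} with hS
  obtain ⟨T, hTsub, hTspan⟩ :=
    exists_finset_subset_span_eq (R := MvPolynomial (Fin n) A) S
  -- choose, for each t ∈ T, a nonzero element of M with leading term t
  have hchoice : ∀ t ∈ (T : Set (Lmod A n r)),
      ∃ f, (f ∈ (M : Set (Lmod A n r)) ∧ f ≠ 0) ∧ ltL f = t := by
    intro t ht
    obtain ⟨f, hf, hft⟩ := hTsub ht
    exact ⟨f, ⟨hf.1, hf.2⟩, hft⟩
  let φ : Lmod A n r → Lmod A n r := fun t =>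
    if h : t ∈ (T : Set (Lmod A n r)) then Classical.choose (hchoice t h) else 0
  have hφ : ∀ t (h : t ∈ (T : Set (Lmod A n r))),
      (φ t ∈ (M : Set (Lmod A n r)) ∧ φ t ≠ 0) ∧ ltL (φ t) = t := by
    intro t h
    simp only [φ, dif_pos h]
    exact Classical.choose_spec (hchoice t h)
  refine ⟨T.image φ, ?_, ?_⟩
  · intro g hg
    simp only [Finset.coe_image, Set.mem_image, Finset.mem_coe] at hg
    obtain ⟨t, ht, rfl⟩ := hg
    obtain ⟨⟨hgM, hg0⟩, -⟩ := hφ t ht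
    exact ⟨hgM, hg0⟩
  · have hGsub : (↑(T.image φ) : Set (Lmod A n r)) ⊆ (M : Set (Lmod A n r)) \ {0} := by
      intro g hg
      simp only [Finset.coe_image, Set.mem_image, Finset.mem_coe] at hg
      obtain ⟨t, ht, rfl⟩ := hg
      obtain ⟨⟨hgM, hg0⟩, -⟩ := hφ t ht
      exact ⟨hgM, hg0⟩
    refine le_antisymm ?_ ?_
    · -- LtS G ≤ LtS M
      refine Submodule.span_mono (Set.image_mono ?_)
      intro g hg
      obtain ⟨hgM, hg0⟩ := hGsub hg.1
      exact ⟨hgM, hg.2⟩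
    · -- LtS M = span S = span T ≤ LtS G
      show LtS _ ≤ LtS _
      rw [LtS, ← hS, ← hTspan]
      refine Submodule.span_le.2 fun t ht => ?_
      obtain ⟨⟨hgM, hg0⟩, hlt⟩ := hφ t ht
      refine Submodule.subset_span ⟨φ t, ⟨?_, hg0⟩, hlt⟩
      exact Finset.mem_coe.2 (Finset.mem_image_of_mem φ (Finset.mem_coe.1 ht))
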